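/- arXiv:1603.04376 — 2 statements merged into one kernel-verified Lean document; each statement's English description precedes it below -/
import Mathlib

section
/- If M is a proper marker set of a graph G (i.e., M is a set of edges containing at least one edge from each connected component of G that is not an isolated vertex), then G has exactly one consistent cut (V1, V2) with M ⊆ E(G[V1]), namely (V(G), ∅). -/
/-- If `M` is a proper marker set of `G` (a set of edges meeting every non-isolated
connected component), then the unique consistent cut `(V1, V2)` with `M ⊆ E(G[V1])`
is `(V(G), ∅)`, i.e. the only admissible `V1` is `Set.univ`. -/
theorem copath_stmt1 {V : Type*} [Fintype V] (G : SimpleGraph V) (M : Set (Sym2 V))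
    (hM : M ⊆ G.edgeSet)
    (proper : ∀ v : V, (∃ w, G.Adj v w) →
      ∃ u w : V, G.Adj u w ∧ s(u, w) ∈ M ∧ G.Reachable v u) :
    {A : Set V | (∀ u v : V, G.Adj u v → (u ∈ A ↔ v ∈ A)) ∧
        (∀ v : V, (∀ w : V, ¬ G.Adj v w) → v ∈ A) ∧
        (∀ u w : V, s(u, w) ∈ M → u ∈ A ∧ w ∈ A)} = {Set.univ} := by
  ext A
  simp only [Set.mem_setOf_eq, Set.mem_singleton_iff]
  constructor
  · rintro ⟨hadj, hiso, hmark⟩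
    have hreach : ∀ u v : V, G.Reachable u v → (u ∈ A ↔ v ∈ A) := by
      intro u v hr0
      induction hr0.some with
      | nil => rfl
      | cons ha p ih => exact (hadj _ _ ha).trans (ih ⟨p⟩)
    ext v
    simp only [Set.mem_univ, iff_true]
    by_cases h : ∃ w, G.Adj v w
    · obtain ⟨u, w, huw, hm, hr⟩ := proper v h
      exact (hreach v u hr).mpr (hmark u w hm).1
    · exact hiso v (fun w hw => h ⟨w, hw⟩)
  · rintro rfl
    exact ⟨fun _ _ _ => Iff.rfl, fun _ _ => trivial, fun _ _ _ => ⟨trivial, trivial⟩⟩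
end

section
/- (Isolation Lemma) Let F be a non-empty family of subsets of a finite universe U of size u, and let N be a positive integer. If a weight function ω: U → {1, ..., N} is chosen uniformly at random (each ω(x) independent and uniform), then with probability at least 1 − u/N there is a unique set S ∈ F minimizing ω(S) = Σ_{x∈S} ω(x). -/
section IsolationAux

variable {U : Type*} [Fintype U] [DecidableEq U] {N : ℕ}

/-- total weight of a set -/
private def wt (ω : U → Fin N) (S : Finset U) : ℕ := ∑ x ∈ S, ((ω x : ℕ) + 1)

/-- `x` is ambiguous for `ω` w.r.t. `F` -/
private def Amb (F : Finset (Finset U)) (x : U) (ω : U → Fin N) : Prop :=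
  (∃ S ∈ F, x ∈ S ∧ ∀ T ∈ F, wt ω S ≤ wt ω T) ∧
  (∃ T ∈ F, x ∉ T ∧ ∀ T' ∈ F, wt ω T ≤ wt ω T')

private lemma wt_notMem {ω₁ ω₂ : U → Fin N} {x : U}
    (hagree : ∀ y, y ≠ x → ω₁ y = ω₂ y) {S : Finset U} (hx : x ∉ S) :
    wt ω₁ S = wt ω₂ S := by
  refine Finset.sum_congr rfl fun y hy => ?_
  rw [hagree y (by rintro rfl; exact hx hy)]

private lemma wt_mem (ω : U → Fin N) {S : Finset U} {x : U} (hx : x ∈ S) :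
    wt ω S = (∑ y ∈ S.erase x, ((ω y : ℕ) + 1)) + ((ω x : ℕ) + 1) :=
  (Finset.sum_erase_add S _ hx).symm

/-- key injectivity: the value at an ambiguous coordinate is determined by the rest -/
private lemma amb_inj (F : Finset (Finset U)) (x : U) {ω₁ ω₂ : U → Fin N}
    (hagree : ∀ y, y ≠ x → ω₁ y = ω₂ y) (h₁ : Amb F x ω₁) (h₂ : Amb F x ω₂) :
    ω₁ = ω₂ := by
  obtain ⟨⟨S₁, hS₁, hxS₁, hmS₁⟩, ⟨T₁, hT₁, hxT₁, hmT₁⟩⟩ := h₁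
  obtain ⟨⟨S₂, hS₂, hxS₂, hmS₂⟩, ⟨T₂, hT₂, hxT₂, hmT₂⟩⟩ := h₂
  set e : Finset U → ℕ := fun S => ∑ y ∈ S.erase x, ((ω₁ y : ℕ) + 1) with he_def
  have he : ∀ S : Finset U, (∑ y ∈ S.erase x, ((ω₂ y : ℕ) + 1)) = e S := by
    intro S
    refine Finset.sum_congr rfl fun y hy => ?_
    rw [hagree y (Finset.ne_of_mem_erase hy)]
  have hnm1 : ∀ S : Finset U, x ∉ S → wt ω₁ S = e S := by
    intro S hx
    rw [he_def]; simp only [Finset.erase_eq_of_notMem hx]; rfl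
  have hnm2 : ∀ S : Finset U, x ∉ S → wt ω₂ S = e S := by
    intro S hx
    rw [← he S, Finset.erase_eq_of_notMem hx]; rfl
  have hm1 : ∀ S : Finset U, x ∈ S → wt ω₁ S = e S + ((ω₁ x : ℕ) + 1) :=
    fun S hx => wt_mem ω₁ hx
  have hm2 : ∀ S : Finset U, x ∈ S → wt ω₂ S = e S + ((ω₂ x : ℕ) + 1) := by
    intro S hx
    rw [wt_mem ω₂ hx, he S]
  -- e T₁ = e T₂
  have hT12 : e T₁ = e T₂ := by
    have h1 : wt ω₁ T₁ ≤ wt ω₁ T₂ := hmT₁ T₂ hT₂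
    have h2 : wt ω₂ T₂ ≤ wt ω₂ T₁ := hmT₂ T₁ hT₁
    rw [hnm1 T₁ hxT₁, hnm1 T₂ hxT₂] at h1
    rw [hnm2 T₂ hxT₂, hnm2 T₁ hxT₁] at h2
    omega
  -- e S₁ = e S₂
  have hS12 : e S₁ = e S₂ := by
    have h1 : wt ω₁ S₁ ≤ wt ω₁ S₂ := hmS₁ S₂ hS₂
    have h2 : wt ω₂ S₂ ≤ wt ω₂ S₁ := hmS₂ S₁ hS₁
    rw [hm1 S₁ hxS₁, hm1 S₂ hxS₂] at h1
    rw [hm2 S₂ hxS₂, hm2 S₁ hxS₁] at h2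
    omega
  -- min values equal within each ω
  have heq1 : wt ω₁ S₁ = wt ω₁ T₁ := le_antisymm (hmS₁ T₁ hT₁) (hmT₁ S₁ hS₁)
  have heq2 : wt ω₂ S₂ = wt ω₂ T₂ := le_antisymm (hmS₂ T₂ hT₂) (hmT₂ S₂ hS₂)
  rw [hm1 S₁ hxS₁, hnm1 T₁ hxT₁] at heq1
  rw [hm2 S₂ hxS₂, hnm2 T₂ hxT₂] at heq2
  have hval : (ω₁ x : ℕ) = (ω₂ x : ℕ) := by omega
  funext y
  by_cases hy : y = x
  · subst hy; exact Fin.ext hval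
  · exact hagree y hy

end IsolationAux

/-- Isolation Lemma: for a non-empty family `F` of subsets of a finite universe `U` of
size `u`, if each element of `U` independently receives a uniformly random weight in
`{1, …, N}`, then with probability at least `1 − u/N` there is a unique `S ∈ F`
minimizing the total weight. (Probability expressed as a count of weight functions
out of `N ^ u`.) -/
theorem copath_stmt13 {U : Type*} [Fintype U] [DecidableEq U]
    (F : Finset (Finset U)) (hF : F.Nonempty) (N : ℕ) (hN : 1 ≤ N) :
    (1 - (Fintype.card U : ℝ) / N) * (N : ℝ) ^ (Fintype.card U) ≤
      (Nat.card {ω : U → Fin N // ∃! S : Finset U, S ∈ F ∧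
        ∀ T ∈ F, (∑ x ∈ S, ((ω x : ℕ) + 1)) ≤ ∑ x ∈ T, ((ω x : ℕ) + 1)} : ℝ) := by
  classical
  set u := Fintype.card U with hu
  set P : (U → Fin N) → Prop := fun ω => ∃! S : Finset U, S ∈ F ∧
      ∀ T ∈ F, (∑ x ∈ S, ((ω x : ℕ) + 1)) ≤ ∑ x ∈ T, ((ω x : ℕ) + 1) with hP
  -- the good set and bad set as Finsets
  set Good : Finset (U → Fin N) := Finset.univ.filter P with hGood
  set Bad : Finset (U → Fin N) := Finset.univ.filter (fun ω => ¬ P ω) with hBad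
  -- ambiguous sets
  set A : U → Finset (U → Fin N) := fun x => Finset.univ.filter (Amb F x) with hA
  -- Bad ⊆ union of A x
  have hBadSub : Bad ⊆ Finset.univ.biUnion A := by
    intro ω hω
    rw [hBad, Finset.mem_filter] at hω
    obtain ⟨-, hnP⟩ := hω
    obtain ⟨S₀, hS₀F, hS₀min⟩ := F.exists_min_image (wt ω) hF
    have hPS₀ : S₀ ∈ F ∧ ∀ T ∈ F, (∑ x ∈ S₀, ((ω x : ℕ) + 1)) ≤ ∑ x ∈ T, ((ω x : ℕ) + 1) :=
      ⟨hS₀F, hS₀min⟩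
    have : ∃ T, (T ∈ F ∧ ∀ T' ∈ F, (∑ x ∈ T, ((ω x : ℕ) + 1)) ≤ ∑ x ∈ T', ((ω x : ℕ) + 1))
        ∧ T ≠ S₀ := by
      by_contra hcon
      push_neg at hcon
      exact hnP ⟨S₀, hPS₀, fun T hT => hcon T hT⟩
    obtain ⟨T, ⟨hTF, hTmin⟩, hTne⟩ := this
    have hdiff : ∃ x, (x ∈ S₀ ∧ x ∉ T) ∨ (x ∈ T ∧ x ∉ S₀) := by
      by_contra hcon
      push_neg at hcon
      apply hTne
      ext y
      constructor
      · intro hy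
        exact (hcon y).2 hy
      · intro hy
        exact (hcon y).1 hy
    obtain ⟨x, hx⟩ := hdiff
    refine Finset.mem_biUnion.2 ⟨x, Finset.mem_univ x, ?_⟩
    rw [hA, Finset.mem_filter]
    refine ⟨Finset.mem_univ ω, ?_⟩
    rcases hx with ⟨hxS, hxT⟩ | ⟨hxT, hxS⟩
    · exact ⟨⟨S₀, hS₀F, hxS, hS₀min⟩, ⟨T, hTF, hxT, hTmin⟩⟩
    · exact ⟨⟨T, hTF, hxT, hTmin⟩, ⟨S₀, hS₀F, hxS, hS₀min⟩⟩
  -- each A x has at most N^(u-1) elements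
  have hAcard : ∀ x : U, (A x).card ≤ N ^ (u - 1) := by
    intro x
    have hinj : Set.InjOn (fun ω : U → Fin N => fun y : {y : U // y ≠ x} => ω y)
        (A x : Set (U → Fin N)) := by
      intro ω₁ h₁ ω₂ h₂ heq
      rw [hA] at h₁ h₂
      simp only [Finset.coe_filter, Set.mem_setOf_eq] at h₁ h₂
      refine amb_inj F x ?_ h₁.2 h₂.2
      intro y hy
      exact congrFun heq ⟨y, hy⟩
    have := Finset.card_le_card_of_injOn
        (fun ω : U → Fin N => fun y : {y : U // y ≠ x} => ω y)
        (fun a _ => Finset.mem_univ _) hinj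
    calc (A x).card ≤ (Finset.univ : Finset ({y : U // y ≠ x} → Fin N)).card := this
      _ = N ^ (u - 1) := by
          rw [Finset.card_univ, Fintype.card_fun, Fintype.card_fin]
          congr 1
          rw [hu]
          rw [Fintype.card_subtype_compl (p := fun y => y = x)]
          simp [Fintype.card_subtype_eq]
  -- bad count
  have hBadCard : Bad.card ≤ u * N ^ (u - 1) := by
    calc Bad.card ≤ (Finset.univ.biUnion A).card := Finset.card_le_card hBadSub
      _ ≤ ∑ x : U, (A x).card := Finset.card_biUnion_le
      _ ≤ ∑ _x : U, N ^ (u - 1) := Finset.sum_le_sum fun x _ => hAcard x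
      _ = u * N ^ (u - 1) := by rw [Finset.sum_const, Finset.card_univ, smul_eq_mul]
  have hsplit : Good.card + Bad.card = N ^ u := by
    rw [hGood, hBad, Finset.card_filter_add_card_filter_not, Finset.card_univ,
      Fintype.card_fun, Fintype.card_fin]
  have hBN : Bad.card * N ≤ u * N ^ u := by
    rcases Nat.eq_zero_or_pos u with h0 | hpos
    · have hb0 : Bad.card = 0 := by
        have := hBadCard
        rw [h0, Nat.zero_mul] at this
        omega
      simp [hb0]
    · calc Bad.card * N ≤ u * N ^ (u - 1) * N := Nat.mul_le_mul_right N hBadCard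
        _ = u * N ^ u := by
            rw [mul_assoc, ← pow_succ]
            congr 2
            omega
  -- identify Nat.card with Good.card
  have hNatCard : Nat.card {ω : U → Fin N // P ω} = Good.card := by
    rw [Nat.card_eq_fintype_card, hGood]
    convert Fintype.card_subtype (p := P) using 1
  have hgoal : Nat.card {ω : U → Fin N // ∃! S : Finset U, S ∈ F ∧
      ∀ T ∈ F, (∑ x ∈ S, ((ω x : ℕ) + 1)) ≤ ∑ x ∈ T, ((ω x : ℕ) + 1)} = Good.card := hNatCard
  rw [hgoal]
  have hN0 : (0 : ℝ) < N := by exact_mod_cast hN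
  have h1 : (Bad.card : ℝ) ≤ u * (N : ℝ) ^ u / N := by
    rw [le_div_iff₀ hN0]
    exact_mod_cast hBN
  have h2 : (Good.card : ℝ) = (N : ℝ) ^ u - Bad.card := by
    have : ((Good.card + Bad.card : ℕ) : ℝ) = ((N ^ u : ℕ) : ℝ) := by rw [hsplit]
    push_cast at this
    linarith
  have h3 : (1 - (u : ℝ) / N) * (N : ℝ) ^ u = (N : ℝ) ^ u - u * (N : ℝ) ^ u / N := by
    ring
  rw [h3, h2]
  linarith
end
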